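/- For every n ≥ 0, the left-sided half-integral of √(1+t)·U_n(t) satisfies (1/√π)·∫_{−1}^{x} √(1+t)·U_n(t)/√(x−t) dt = (√π/2)·(P_{n+1}(x) + P_n(x)) for all x ∈ (−1, 1]. -/

import Mathlib

open Real intervalIntegral

/-- Ultraspherical (Gegenbauer) polynomials via the three-term recurrence
`(n+1) C_{n+1} = 2(n+λ) x C_n − (n+2λ−1) C_{n−1}`, `C_0 = 1`, `C_{-1} = 0`. -/
noncomputable def Geg (l : ℝ) : ℕ → ℝ → ℝ
  | 0, _ => 1
  | 1, x => 2 * l * x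
  | (n + 2), x =>
      (2 * ((n : ℝ) + 1 + l) * x * Geg l (n + 1) x
        - ((n : ℝ) + 2 * l) * Geg l n x) / ((n : ℝ) + 2)

/-- Ultraspherical polynomials with integer index, zero for negative index. -/
noncomputable def GegZ (l : ℝ) (n : ℤ) (x : ℝ) : ℝ :=
  if 0 ≤ n then Geg l n.toNat x else 0

open MeasureTheory


noncomputable def pc : ℕ → ℤ → ℝ
  | 0, j => if j = 0 then 1 else 0
  | 1, j => if j = 0 then -1 else if j = 1 then 1 else 0
  | (m+2), j => ((2*(m:ℝ)+3) * (pc (m+1) (j-1) - pc (m+1) j) - ((m:ℝ)+1) * pc m j)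
      / ((m:ℝ)+2)

noncomputable def ac : ℕ → ℤ → ℝ
  | 0, j => if j = 0 then 1 else 0
  | 1, j => if j = 0 then -2 else if j = 1 then 2 else 0
  | (n+2), j => 2 * ac (n+1) (j-1) - 2 * ac (n+1) j - ac n j

noncomputable def qc (n : ℕ) (j : ℤ) : ℝ := pc (n+1) j + pc n j

lemma idx1 (m : ℕ) : m + 1 + 1 = m + 2 := rfl
lemma idx2 (m : ℕ) : m + 2 + 1 = m + 3 := rfl
lemma izz (z : ℤ) : z - 1 + 1 = z := by ring
lemma izz' (z : ℤ) : z + 1 - 1 = z := by ring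

lemma pc_rec (m : ℕ) (j : ℤ) :
    ((m:ℝ)+2) * pc (m+2) j
      = (2*(m:ℝ)+3) * (pc (m+1) (j-1) - pc (m+1) j) - ((m:ℝ)+1) * pc m j := by
  have hm : ((m:ℝ)+2) ≠ 0 := by positivity
  rw [pc]; field_simp

lemma pc_neg : ∀ (m : ℕ) (j : ℤ), j < 0 → pc m j = 0 := by
  intro m
  induction m using Nat.strong_induction_on with
  | _ m ih =>
    match m with
    | 0 => intro j hj; rw [pc, if_neg (by omega)]
    | 1 => intro j hj; rw [pc, if_neg (by omega), if_neg (by omega)]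
    | (m+2) =>
      intro j hj
      rw [pc, ih (m+1) (by omega) (j-1) (by omega), ih (m+1) (by omega) j hj,
        ih m (by omega) j hj]
      ring

lemma pc_high : ∀ (m : ℕ) (j : ℤ), (m:ℤ) < j → pc m j = 0 := by
  intro m
  induction m using Nat.strong_induction_on with
  | _ m ih =>
    match m with
    | 0 => intro j hj; rw [pc, if_neg (by omega)]
    | 1 => intro j hj; rw [pc, if_neg (by omega), if_neg (by omega)]
    | (m+2) =>
      intro j hj
      rw [pc, ih (m+1) (by omega) (j-1) (by push_cast at hj ⊢; omega),
        ih (m+1) (by omega) j (by push_cast at hj ⊢; omega),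
        ih m (by omega) j (by push_cast at hj ⊢; omega)]
      ring

lemma ac_neg : ∀ (n : ℕ) (j : ℤ), j < 0 → ac n j = 0 := by
  intro n
  induction n using Nat.strong_induction_on with
  | _ n ih =>
    match n with
    | 0 => intro j hj; rw [ac, if_neg (by omega)]
    | 1 => intro j hj; rw [ac, if_neg (by omega), if_neg (by omega)]
    | (n+2) =>
      intro j hj
      rw [ac, ih (n+1) (by omega) (j-1) (by omega), ih (n+1) (by omega) j hj,
        ih n (by omega) j hj]
      ring

lemma ac_high : ∀ (n : ℕ) (j : ℤ), (n:ℤ) < j → ac n j = 0 := by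
  intro n
  induction n using Nat.strong_induction_on with
  | _ n ih =>
    match n with
    | 0 => intro j hj; rw [ac, if_neg (by omega)]
    | 1 => intro j hj; rw [ac, if_neg (by omega), if_neg (by omega)]
    | (n+2) =>
      intro j hj
      rw [ac, ih (n+1) (by omega) (j-1) (by push_cast at hj ⊢; omega),
        ih (n+1) (by omega) j (by push_cast at hj ⊢; omega),
        ih n (by omega) j (by push_cast at hj ⊢; omega)]
      ring

def Ep (m : ℕ) : Prop :=
  ∀ j : ℤ, ((j:ℝ)+1) * (pc (m+1) (j+1) + pc m (j+1)) = ((j:ℝ) - ((m:ℝ)+1)) * pc (m+1) j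

def Gp (m : ℕ) : Prop :=
  ∀ j : ℤ, ((j:ℝ) - ((m:ℝ)+1)) * pc (m+1) j = ((j:ℝ) + (m:ℝ) + 1) * pc m j

lemma cancel_aux {a b c : ℝ} (ha : a ≠ 0) (h : a*(b-c) = 0) : b = c := by
  rcases mul_eq_zero.mp h with h'|h'
  · exact absurd h' ha
  · linarith

lemma EG : ∀ m : ℕ, Ep m ∧ Gp m := by
  intro m
  induction m with
  | zero =>
    constructor
    · intro j
      rcases lt_or_ge j 0 with hj|hj
      · rcases eq_or_lt_of_le (by omega : j ≤ -1) with hm1|hm1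
        · subst hm1; norm_num [pc]
        · rw [pc_neg 1 (j+1) (by omega), pc_neg 0 (j+1) (by omega),
            pc_neg 1 j (by omega)]; ring
      rcases eq_or_lt_of_le hj with h0|h0
      · rw [← h0]; norm_num [pc]
      rcases eq_or_lt_of_le (by omega : (1:ℤ) ≤ j) with h1|h1
      · rw [← h1]; norm_num [pc]
      · rw [pc_high 1 (j+1) (by omega), pc_high 0 (j+1) (by omega),
          pc_high 1 j (by omega)]; ring
    · intro j
      rcases lt_or_ge j 0 with hj|hj
      · rw [pc_neg 1 j (by omega), pc_neg 0 j (by omega)]; ring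
      rcases eq_or_lt_of_le hj with h0|h0
      · rw [← h0]; norm_num [pc]
      rcases eq_or_lt_of_le (by omega : (1:ℤ) ≤ j) with h1|h1
      · rw [← h1]; norm_num [pc]
      · rw [pc_high 1 j (by omega), pc_high 0 j (by omega)]; ring
  | succ m ih =>
    obtain ⟨hEp, hGp⟩ := ih
    have hm : ((m:ℝ)+2) ≠ 0 := by positivity
    have hGp' : Gp (m+1) := by
      intro j
      have hrec := pc_rec m j
      have hE := hEp (j-1)
      have hG := hGp j
      apply cancel_aux hm
      simp only [idx1, idx2, izz, izz'] at hE ⊢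
      push_cast at hE ⊢
      linear_combination ((j:ℝ)-(m:ℝ)-2) * hrec - (2*(m:ℝ)+3) * hE - ((m:ℝ)+2) * hG
    have hD : ∀ j : ℤ, ((j:ℝ)+1) * (pc (m+2) (j+1) - pc m (j+1))
        = (2*(m:ℝ)+3) * pc (m+1) j := by
      intro j
      have hrec := pc_rec m (j+1)
      have hE := hEp j
      apply cancel_aux hm
      simp only [idx1, idx2, izz, izz'] at hrec ⊢
      linear_combination ((j:ℝ)+1) * hrec - (2*(m:ℝ)+3) * hE
    refine ⟨?_, hGp'⟩
    intro j
    have hD' := hD j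
    have hE := hEp j
    have hG := hGp' j
    simp only [idx1, idx2, izz, izz'] at hG ⊢
    push_cast at hG ⊢
    linear_combination hD' + hE - hG

lemma STAR (n : ℕ) (j : ℤ) :
    (j:ℝ) * qc (n+2) j
      = (2*(j:ℝ)-1) * qc (n+1) (j-1) - 2*(j:ℝ) * qc (n+1) j - (j:ℝ) * qc n j := by
  obtain ⟨hEp1, hGp1⟩ := EG (n+1)
  obtain ⟨hEp0, -⟩ := EG n
  have hm1 : ((n:ℝ)+3) ≠ 0 := by positivity
  have hm0 : ((n:ℝ)+2) ≠ 0 := by positivity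
  have hD1 : (j:ℝ) * (pc (n+3) j - pc (n+1) j) = (2*(n:ℝ)+5) * pc (n+2) (j-1) := by
    have hrec := pc_rec (n+1) j
    have hE := hEp1 (j-1)
    apply cancel_aux hm1
    simp only [idx1, idx2, izz, izz'] at hrec hE ⊢
    push_cast at hrec hE ⊢
    linear_combination (j:ℝ) * hrec - (2*(n:ℝ)+5) * hE
  have hD0 : (j:ℝ) * (pc (n+2) j - pc n j) = (2*(n:ℝ)+3) * pc (n+1) (j-1) := by
    have hrec := pc_rec n j
    have hE := hEp0 (j-1)
    apply cancel_aux hm0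
    simp only [idx1, idx2, izz, izz'] at hrec hE ⊢
    push_cast at hrec hE ⊢
    linear_combination (j:ℝ) * hrec - (2*(n:ℝ)+3) * hE
  have hE := hEp1 (j-1)
  have hG := hGp1 (j-1)
  unfold qc
  simp only [idx1, idx2, izz, izz'] at hE hG ⊢
  push_cast at hE hG ⊢
  linear_combination hD1 - hD0 + 4*hE + 2*hG

lemma izz2 (z : ℤ) : z + 2 - 1 = z + 1 := by ring
lemma izz3 (z : ℤ) : z + 1 + 1 = z + 2 := by ring

noncomputable def cJ (k : ℕ) : ℝ :=
  Real.Gamma ((k:ℝ) + 3/2) * Real.sqrt π / Real.Gamma ((k:ℝ) + 2)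

lemma cJ_zero : cJ 0 = π / 2 := by
  have h1 : ((0:ℕ):ℝ) + 3/2 = 1/2 + 1 := by norm_num
  have h2 : ((0:ℕ):ℝ) + 2 = 1 + 1 := by norm_num
  rw [cJ, h1, h2, Real.Gamma_add_one (by norm_num), Real.Gamma_add_one (by norm_num),
    Real.Gamma_one_half_eq, Real.Gamma_one]
  have hs : Real.sqrt π * Real.sqrt π = π := Real.mul_self_sqrt Real.pi_pos.le
  linear_combination hs / 2

lemma cJ_succ (k : ℕ) : (2*(k:ℝ)+4) * cJ (k+1) = (2*(k:ℝ)+3) * cJ k := by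
  have h1 : (((k+1):ℕ):ℝ) + 3/2 = ((k:ℝ) + 3/2) + 1 := by push_cast; ring
  have h2 : (((k+1):ℕ):ℝ) + 2 = ((k:ℝ) + 2) + 1 := by push_cast; ring
  have hg1 : ((k:ℝ) + 3/2) ≠ 0 := by positivity
  have hg2 : ((k:ℝ) + 2) ≠ 0 := by positivity
  have hG2 : Real.Gamma ((k:ℝ) + 2) ≠ 0 := (Real.Gamma_pos_of_pos (by positivity)).ne'
  have hG3 : Real.Gamma (((k:ℝ) + 2) + 1) ≠ 0 := (Real.Gamma_pos_of_pos (by positivity)).ne'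
  rw [cJ, cJ, h1, h2, Real.Gamma_add_one hg1, Real.Gamma_add_one hg2]
  field_simp
  ring

lemma ac_rec (n : ℕ) (j : ℤ) :
    ac (n+2) j = 2 * ac (n+1) (j-1) - 2 * ac (n+1) j - ac n j := by rw [ac]

lemma Mlem : ∀ n : ℕ,
    (∀ k : ℕ, ac n (k:ℤ) * cJ k = π/2 * qc n ((k:ℤ)+1)) ∧ qc n 0 = 0 := by
  intro n
  induction n using Nat.strong_induction_on with
  | _ n ih =>
    match n with
    | 0 =>
      constructor
      · intro k
        match k with
        | 0 => norm_num [ac, qc, pc, cJ_zero]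
        | (k+1) =>
          rw [ac, if_neg (by omega)]
          unfold qc
          rw [pc_high 1 _ (by push_cast; omega), pc_high 0 _ (by push_cast; omega)]
          ring
      · norm_num [qc, pc]
    | 1 =>
      constructor
      · intro k
        match k with
        | 0 =>
          have h1 : qc 1 1 = -2 := by norm_num [qc, pc]
          simp only [Nat.cast_zero, zero_add] at *
          rw [h1, ac, cJ_zero]
          norm_num
          ring
        | 1 =>
          have h1 : qc 1 2 = 3/2 := by norm_num [qc, pc]
          have h2 : cJ 1 = 3*π/8 := by
            have := cJ_succ 0
            rw [cJ_zero] at this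
            push_cast at this
            linarith
          rw [ac]
          norm_num [h1, h2]
          ring
        | (k+2) =>
          rw [ac, if_neg (by omega), if_neg (by omega)]
          unfold qc
          rw [pc_high 2 _ (by push_cast; omega), pc_high 1 _ (by push_cast; omega)]
          ring
      · norm_num [qc, pc]
    | (n+2) =>
      obtain ⟨IH1, hz1⟩ := ih (n+1) (by omega)
      obtain ⟨IH0, hz0⟩ := ih n (by omega)
      have hq0 : qc (n+2) 0 = 0 := by
        have h1 := pc_rec (n+1) 0
        rw [pc_neg (n+2) (0-1) (by omega)] at h1
        simp only [idx1, idx2] at h1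
        push_cast at h1
        have h2 : qc (n+1) 0 = 0 := hz1
        unfold qc at h2 ⊢
        simp only [idx1, idx2] at h2 ⊢
        apply cancel_aux (show ((n:ℝ)+3) ≠ 0 by positivity)
        linear_combination h1 - ((n:ℝ)+2) * h2
      refine ⟨?_, hq0⟩
      intro k
      rw [ac_rec]
      match k with
      | 0 =>
        rw [show ((0:ℕ):ℤ) - 1 = -1 by norm_num, ac_neg (n+1) (-1) (by omega)]
        have e2 := IH1 0
        have e3 := IH0 0
        have hS := STAR n 1
        rw [show (1:ℤ) - 1 = 0 from rfl] at hS
        rw [hz1] at hS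
        push_cast at e2 e3 hS ⊢
        linear_combination (-2:ℝ)*e2 - e3 - (π/2)*hS
      | (k+1) =>
        have e1 := IH1 k
        have e2 := IH1 (k+1)
        have e3 := IH0 (k+1)
        have hc := cJ_succ k
        have hS := STAR n ((k:ℤ)+2)
        apply cancel_aux (show ((k:ℝ)+2)*(2*(k:ℝ)+4) ≠ 0 by positivity)
        push_cast at e1 e2 e3 hS ⊢
        simp only [idx1, idx2, izz, izz', izz2, izz3] at e1 e2 e3 hS ⊢
        linear_combination 2*((k:ℝ)+2)*(ac (n+1) (k:ℤ))*hc + 2*((k:ℝ)+2)*(2*(k:ℝ)+3)*e1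
          - 2*((k:ℝ)+2)*(2*(k:ℝ)+4)*e2 - ((k:ℝ)+2)*(2*(k:ℝ)+4)*e3 - (2*(k:ℝ)+4)*(π/2)*hS

lemma pc_zero_def (j : ℤ) : pc 0 j = if j = 0 then 1 else 0 := by rw [pc]
lemma pc_one_def (j : ℤ) : pc 1 j = if j = 0 then -1 else if j = 1 then 1 else 0 := by rw [pc]
lemma ac_zero_def (j : ℤ) : ac 0 j = if j = 0 then 1 else 0 := by rw [ac]
lemma ac_one_def (j : ℤ) : ac 1 j = if j = 0 then -2 else if j = 1 then 2 else 0 := by rw [ac]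
lemma shift_sum (f : ℕ → ℤ → ℝ) (hneg : ∀ m j, j < 0 → f m j = 0) (a : ℕ) (N : ℕ) (x : ℝ) :
    ∑ j ∈ Finset.range (N+1), f a ((j:ℤ)-1) * (1+x)^j
      = (1+x) * ∑ i ∈ Finset.range N, f a (i:ℤ) * (1+x)^i := by
  rw [Finset.sum_range_succ']
  have e : ∀ i ∈ Finset.range N, f a (((i+1:ℕ):ℤ)-1) * (1+x)^(i+1)
      = (1+x) * (f a (i:ℤ) * (1+x)^i) := by
    intro i _
    have : ((i+1:ℕ):ℤ) - 1 = (i:ℤ) := by push_cast; ring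
    rw [this]; ring
  rw [Finset.sum_congr rfl e, ← Finset.mul_sum]
  rw [hneg a (((0:ℕ):ℤ)-1) (by omega)]
  ring

lemma repP : ∀ (m : ℕ) (x : ℝ),
    Geg (1/2) m x = ∑ j ∈ Finset.range (m+1), pc m (j:ℤ) * (1+x)^j := by
  intro m
  induction m using Nat.strong_induction_on with
  | _ m ih =>
    match m with
    | 0 => intro x; simp [Geg, pc_zero_def]
    | 1 =>
      intro x
      rw [Geg]
      rw [Finset.sum_range_succ, Finset.sum_range_succ, Finset.sum_range_zero]
      simp [pc_one_def]
    | (m+2) =>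
      intro x
      have hm : ((m:ℝ)+2) ≠ 0 := by positivity
      have I1 := ih (m+1) (by omega) x
      have I0 := ih m (by omega) x
      rw [Geg, I1, I0]
      have h2 := shift_sum pc pc_neg (m+1) (m+2) x
      have h3 : ∑ j ∈ Finset.range (m+3), pc (m+1) (j:ℤ) * (1+x)^j
          = ∑ j ∈ Finset.range (m+2), pc (m+1) (j:ℤ) * (1+x)^j := by
        rw [Finset.sum_range_succ, pc_high (m+1) ((m+2:ℕ):ℤ) (by push_cast; omega)]
        simp
      have h4 : ∑ j ∈ Finset.range (m+3), pc m (j:ℤ) * (1+x)^j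
          = ∑ j ∈ Finset.range (m+1), pc m (j:ℤ) * (1+x)^j := by
        rw [Finset.sum_range_succ, Finset.sum_range_succ,
          pc_high m ((m+2:ℕ):ℤ) (by push_cast; omega),
          pc_high m ((m+1:ℕ):ℤ) (by push_cast; omega)]
        simp
      have key : ∑ j ∈ Finset.range (m+3), pc (m+2) (j:ℤ) * (1+x)^j
          = ((2*(m:ℝ)+3) * ((1+x) * ∑ j ∈ Finset.range (m+2), pc (m+1) (j:ℤ) * (1+x)^j
                - ∑ j ∈ Finset.range (m+2), pc (m+1) (j:ℤ) * (1+x)^j)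
              - ((m:ℝ)+1) * ∑ j ∈ Finset.range (m+1), pc m (j:ℤ) * (1+x)^j) / ((m:ℝ)+2) := by
        have e1 : ∀ j ∈ Finset.range (m+3), pc (m+2) (j:ℤ) * (1+x)^j
            = ((2*(m:ℝ)+3) * (pc (m+1) ((j:ℤ)-1) * (1+x)^j)
                - (2*(m:ℝ)+3) * (pc (m+1) (j:ℤ) * (1+x)^j)
                - ((m:ℝ)+1) * (pc m (j:ℤ) * (1+x)^j)) / ((m:ℝ)+2) := by
          intro j _
          have hr := pc_rec m (j:ℤ)
          rw [eq_div_iff hm]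
          linear_combination (1+x)^j * hr
        rw [Finset.sum_congr rfl e1, ← Finset.sum_div]
        rw [Finset.sum_sub_distrib, Finset.sum_sub_distrib, ← Finset.mul_sum, ← Finset.mul_sum,
          ← Finset.mul_sum]
        rw [h2, h3, h4]
        ring
      rw [key]
      congr 1
      ring

lemma repA : ∀ (n : ℕ) (x : ℝ),
    Geg 1 n x = ∑ k ∈ Finset.range (n+1), ac n (k:ℤ) * (1+x)^k := by
  intro n
  induction n using Nat.strong_induction_on with
  | _ n ih =>
    match n with
    | 0 => intro x; simp [Geg, ac_zero_def]
    | 1 =>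
      intro x
      rw [Geg]
      rw [Finset.sum_range_succ, Finset.sum_range_succ, Finset.sum_range_zero]
      simp [ac_one_def]
      ring
    | (n+2) =>
      intro x
      have hm : ((n:ℝ)+2) ≠ 0 := by positivity
      have I1 := ih (n+1) (by omega) x
      have I0 := ih n (by omega) x
      rw [Geg, I1, I0]
      have h2 := shift_sum ac ac_neg (n+1) (n+2) x
      have h3 : ∑ j ∈ Finset.range (n+3), ac (n+1) (j:ℤ) * (1+x)^j
          = ∑ j ∈ Finset.range (n+2), ac (n+1) (j:ℤ) * (1+x)^j := by
        rw [Finset.sum_range_succ, ac_high (n+1) ((n+2:ℕ):ℤ) (by push_cast; omega)]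
        simp
      have h4 : ∑ j ∈ Finset.range (n+3), ac n (j:ℤ) * (1+x)^j
          = ∑ j ∈ Finset.range (n+1), ac n (j:ℤ) * (1+x)^j := by
        rw [Finset.sum_range_succ, Finset.sum_range_succ,
          ac_high n ((n+2:ℕ):ℤ) (by push_cast; omega),
          ac_high n ((n+1:ℕ):ℤ) (by push_cast; omega)]
        simp
      have key : ∑ j ∈ Finset.range (n+3), ac (n+2) (j:ℤ) * (1+x)^j
          = 2 * ((1+x) * ∑ j ∈ Finset.range (n+2), ac (n+1) (j:ℤ) * (1+x)^j)
              - 2 * ∑ j ∈ Finset.range (n+2), ac (n+1) (j:ℤ) * (1+x)^j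
              - ∑ j ∈ Finset.range (n+1), ac n (j:ℤ) * (1+x)^j := by
        have e1 : ∀ j ∈ Finset.range (n+3), ac (n+2) (j:ℤ) * (1+x)^j
            = 2 * (ac (n+1) ((j:ℤ)-1) * (1+x)^j) - 2 * (ac (n+1) (j:ℤ) * (1+x)^j)
                - ac n (j:ℤ) * (1+x)^j := by
          intro j _
          rw [ac_rec]
          ring
        rw [Finset.sum_congr rfl e1]
        rw [Finset.sum_sub_distrib, Finset.sum_sub_distrib, ← Finset.mul_sum, ← Finset.mul_sum]
        rw [h2, h3, h4]
      rw [key]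
      field_simp
      ring

/-- The Beta integral value in rpow form. -/
lemma Jrpow (k : ℕ) :
    ∫ u in (0:ℝ)..1, u ^ ((k:ℝ)+1/2) * (1-u) ^ (-(1/2):ℝ) = cJ k := by
  have hs : (0:ℝ) < (k:ℝ) + 3/2 := by positivity
  have ht : (0:ℝ) < (1/2:ℝ) := by norm_num
  have hbeta := Complex.Gamma_mul_Gamma_eq_betaIntegral
    (s := (((k:ℝ) + 3/2 : ℝ) : ℂ)) (t := ((1/2 : ℝ) : ℂ))
    (by simpa using hs) (by simpa using ht)
  have hint : Complex.betaIntegral (((k:ℝ) + 3/2 : ℝ) : ℂ) ((1/2 : ℝ) : ℂ)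
      = ((∫ u in (0:ℝ)..1, u ^ ((k:ℝ)+1/2) * (1-u) ^ (-(1/2):ℝ) : ℝ) : ℂ) := by
    rw [Complex.betaIntegral, ← intervalIntegral.integral_ofReal]
    apply intervalIntegral.integral_congr
    intro u hu
    rw [Set.uIcc_of_le (by norm_num : (0:ℝ) ≤ 1)] at hu
    obtain ⟨h0, h1⟩ := hu
    have e1 : (((u : ℝ) ^ ((k:ℝ)+1/2) : ℝ) : ℂ) = (u:ℂ) ^ ((((k:ℝ) + 3/2 : ℝ) : ℂ) - 1) := by
      rw [Complex.ofReal_cpow h0]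
      congr 1
      push_cast
      ring
    have e2 : (((1 - u : ℝ) ^ (-(1/2):ℝ) : ℝ) : ℂ) = ((1:ℂ) - (u:ℂ)) ^ (((1/2 : ℝ) : ℂ) - 1) := by
      rw [Complex.ofReal_cpow (by linarith)]
      push_cast
      congr 1
      ring
    show (u:ℂ) ^ ((((k:ℝ) + 3/2 : ℝ) : ℂ) - 1) * ((1:ℂ) - (u:ℂ)) ^ (((1/2 : ℝ) : ℂ) - 1)
        = (((u ^ ((k:ℝ)+1/2) * (1-u) ^ (-(1/2):ℝ) : ℝ)) : ℂ)
    rw [Complex.ofReal_mul, e1, e2]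
  rw [hint] at hbeta
  have hG1 : Complex.Gamma (((k:ℝ) + 3/2 : ℝ) : ℂ) = (Real.Gamma ((k:ℝ) + 3/2) : ℂ) :=
    Complex.Gamma_ofReal _
  have hG2 : Complex.Gamma ((1/2 : ℝ) : ℂ) = (Real.Gamma (1/2) : ℂ) := Complex.Gamma_ofReal _
  have hsum : (((k:ℝ) + 3/2 : ℝ) : ℂ) + ((1/2 : ℝ) : ℂ) = (((k:ℝ) + 2 : ℝ) : ℂ) := by
    push_cast; ring
  rw [hG1, hG2, hsum, Complex.Gamma_ofReal] at hbeta
  have hreal : Real.Gamma ((k:ℝ) + 3/2) * Real.Gamma (1/2)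
      = Real.Gamma ((k:ℝ) + 2) * ∫ u in (0:ℝ)..1, u ^ ((k:ℝ)+1/2) * (1-u) ^ (-(1/2):ℝ) := by
    have := hbeta
    rw [← Complex.ofReal_mul, ← Complex.ofReal_mul] at this
    exact_mod_cast this
  have hGne : Real.Gamma ((k:ℝ) + 2) ≠ 0 := (Real.Gamma_pos_of_pos (by positivity)).ne'
  rw [Real.Gamma_one_half_eq] at hreal
  rw [cJ, eq_div_iff hGne]
  linarith [hreal]

/-- The Beta integral value in sqrt form. -/
lemma Jsqrt (k : ℕ) :
    ∫ u in (0:ℝ)..1, Real.sqrt u * u^k * (1-u) ^ (-(1/2):ℝ) = cJ k := by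
  rw [← Jrpow k]
  apply intervalIntegral.integral_congr
  intro u hu
  rw [Set.uIcc_of_le (by norm_num : (0:ℝ) ≤ 1)] at hu
  obtain ⟨h0, h1⟩ := hu
  show Real.sqrt u * u^k * (1-u) ^ (-(1/2):ℝ) = u ^ ((k:ℝ)+1/2) * (1-u) ^ (-(1/2):ℝ)
  congr 1
  rw [Real.sqrt_eq_rpow, ← Real.rpow_natCast u k, ← Real.rpow_add' h0 (by positivity)]
  congr 1
  ring

lemma intg (k : ℕ) (x : ℝ) (hx : (-1:ℝ) < x) :
    IntervalIntegrable (fun t => Real.sqrt (1+t) * (1+t)^k * (x-t) ^ (-(1/2):ℝ))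
      volume (-1) x := by
  have h1 : IntervalIntegrable (fun s : ℝ => s ^ (-(1/2):ℝ)) volume (1+x) 0 :=
    intervalIntegrable_rpow' (by norm_num)
  have h2 : IntervalIntegrable (fun t => (x - t) ^ (-(1/2):ℝ)) volume (-1) x := by
    have h := h1.comp_sub_left x
    rw [show x - (1+x) = -1 by ring, sub_zero] at h
    exact h
  have hg : Continuous (fun t : ℝ => Real.sqrt (1+t) * (1+t)^k) := by
    have h1 : Continuous (fun t : ℝ => 1 + t) := continuous_const.add continuous_id
    exact (Real.continuous_sqrt.comp h1).mul (h1.pow k)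
  exact h2.continuousOn_mul hg.continuousOn

lemma Ik (k : ℕ) (x : ℝ) (hx : (-1:ℝ) < x) :
    ∫ t in (-1:ℝ)..x, Real.sqrt (1+t) * (1+t)^k * (x-t) ^ (-(1/2):ℝ)
      = cJ k * (1+x)^(k+1) := by
  set c : ℝ := 1 + x with hc
  have hcpos : 0 < c := by simp [hc]; linarith
  have comp := intervalIntegral.integral_comp_mul_add
    (a := (0:ℝ)) (b := 1) (f := fun t => Real.sqrt (1+t) * (1+t)^k * (x-t) ^ (-(1/2):ℝ))
    (c := c) hcpos.ne' (-1)
  rw [mul_zero, mul_one, zero_add, show c + -1 = x by rw [hc]; ring] at comp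
  have inner : ∫ u in (0:ℝ)..1,
      Real.sqrt (1+(c*u + -1)) * (1+(c*u + -1))^k * (x-(c*u + -1)) ^ (-(1/2):ℝ)
      = c^k * cJ k := by
    have congr1 : ∀ u ∈ Set.uIcc (0:ℝ) 1,
        Real.sqrt (1+(c*u + -1)) * (1+(c*u + -1))^k * (x-(c*u + -1)) ^ (-(1/2):ℝ)
        = c^k * (Real.sqrt u * u^k * (1-u) ^ (-(1/2):ℝ)) := by
      intro u hu
      rw [Set.uIcc_of_le (by norm_num : (0:ℝ) ≤ 1)] at hu
      obtain ⟨h0, h1⟩ := hu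
      have ea : 1 + (c*u + -1) = c * u := by ring
      have eb : x - (c*u + -1) = c * (1-u) := by rw [hc]; ring
      rw [ea, eb, Real.sqrt_mul hcpos.le, mul_pow,
        Real.mul_rpow hcpos.le (by linarith)]
      have : Real.sqrt c * c ^ (-(1/2):ℝ) * c^k = c^k := by
        rw [Real.sqrt_eq_rpow, ← Real.rpow_add hcpos]
        norm_num
      calc Real.sqrt c * Real.sqrt u * (c^k * u^k) * (c ^ (-(1/2):ℝ) * (1-u) ^ (-(1/2):ℝ))
          = (Real.sqrt c * c ^ (-(1/2):ℝ) * c^k) * (Real.sqrt u * u^k * (1-u) ^ (-(1/2):ℝ)) := by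
            ring
        _ = c^k * (Real.sqrt u * u^k * (1-u) ^ (-(1/2):ℝ)) := by rw [this]
    rw [intervalIntegral.integral_congr congr1, intervalIntegral.integral_const_mul, Jsqrt]
  rw [inner, eq_comm, inv_smul_eq_iff₀ hcpos.ne'] at comp
  rw [comp, smul_eq_mul, hc]
  ring

theorem stmt8 (n : ℕ) (x : ℝ) (hx : x ∈ Set.Ioc (-1 : ℝ) 1) :
    (1 / Real.sqrt π) *
        ∫ t in (-1 : ℝ)..x, Real.sqrt (1 + t) * Geg 1 n t / Real.sqrt (x - t) =
      Real.sqrt π / 2 * (Geg (1/2) (n + 1) x + Geg (1/2) n x) := by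
  obtain ⟨hx1, -⟩ := hx
  have hsqpi : Real.sqrt π ≠ 0 := by
    have := Real.sqrt_pos.mpr Real.pi_pos
    linarith
  have hpisq : Real.sqrt π * Real.sqrt π = π := Real.mul_self_sqrt Real.pi_pos.le
  -- the right-hand side as a single sum
  have hR : Geg (1/2) (n + 1) x + Geg (1/2) n x
      = ∑ k ∈ Finset.range (n+1), qc n ((k:ℤ)+1) * (1+x)^(k+1) := by
    rw [repP (n+1) x, repP n x]
    have hext : ∑ j ∈ Finset.range (n+1), pc n (j:ℤ) * (1+x)^j
        = ∑ j ∈ Finset.range (n+2), pc n (j:ℤ) * (1+x)^j := by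
      conv_rhs => rw [Finset.sum_range_succ]
      rw [pc_high n ((n+1:ℕ):ℤ) (by push_cast; omega)]
      simp
    have hq : ∀ j ∈ Finset.range (n+2),
        pc (n+1) (j:ℤ) * (1+x)^j + pc n (j:ℤ) * (1+x)^j = qc n (j:ℤ) * (1+x)^j := by
      intro j _
      rw [qc]; ring
    rw [hext, ← Finset.sum_add_distrib, Finset.sum_congr rfl hq, Finset.sum_range_succ']
    have hq0 : qc n ((0:ℕ):ℤ) * (1+x)^0 = 0 := by
      rw [show ((0:ℕ):ℤ) = 0 from rfl, (Mlem n).2]; ring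
    rw [hq0, add_zero]
    apply Finset.sum_congr rfl
    intro i _
    norm_cast
  -- the left-hand side integral as a single sum
  have hcongr : ∀ t ∈ Set.uIcc (-1:ℝ) x,
      Real.sqrt (1 + t) * Geg 1 n t / Real.sqrt (x - t)
        = ∑ k ∈ Finset.range (n+1),
            ac n (k:ℤ) * (Real.sqrt (1+t) * (1+t)^k * (x-t) ^ (-(1/2):ℝ)) := by
    intro t ht
    rw [Set.uIcc_of_le hx1.le] at ht
    have hxt : (0:ℝ) ≤ x - t := by linarith [ht.2]
    have hinv : (Real.sqrt (x-t))⁻¹ = (x-t) ^ (-(1/2):ℝ) := by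
      rw [Real.rpow_neg hxt, Real.sqrt_eq_rpow]
    rw [div_eq_mul_inv, hinv, repA n t, Finset.mul_sum, Finset.sum_mul]
    exact Finset.sum_congr rfl (fun k _ => by ring)
  rw [intervalIntegral.integral_congr hcongr]
  rw [intervalIntegral.integral_finset_sum
    (fun k _ => (intg k x hx1).const_mul (ac n (k:ℤ)))]
  have hIk : ∀ k ∈ Finset.range (n+1),
      (∫ t in (-1:ℝ)..x, ac n (k:ℤ) * (Real.sqrt (1+t) * (1+t)^k * (x-t) ^ (-(1/2):ℝ)))
        = π/2 * qc n ((k:ℤ)+1) * (1+x)^(k+1) := by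
    intro k _
    rw [intervalIntegral.integral_const_mul, Ik k x hx1, ← mul_assoc, (Mlem n).1 k]
  rw [Finset.sum_congr rfl hIk, hR]
  -- compare term by term
  have hscal : 1/Real.sqrt π * (π/2) = Real.sqrt π / 2 := by
    field_simp
    rw [sq, hpisq]
  rw [Finset.mul_sum, Finset.mul_sum]
  apply Finset.sum_congr rfl
  intro k _
  calc (1:ℝ)/Real.sqrt π * (π/2 * qc n ((k:ℤ)+1) * (1+x)^(k+1))
      = (1/Real.sqrt π * (π/2)) * (qc n ((k:ℤ)+1) * (1+x)^(k+1)) := by ring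
    _ = Real.sqrt π / 2 * (qc n ((k:ℤ)+1) * (1+x)^(k+1)) := by rw [hscal]
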